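/- Let φ : ℝ³ → Mₙ(ℝ) be infinitely differentiable and satisfy the first two noncommutative Burgers hierarchy equations φ_y = φ_xx + 2φ_x φ and φ_t = φ_xxx + 3φ_xx φ + 3φ_x² + 3φ_x φ². Then φ satisfies the noncommutative potential KP equation ∂_x(4φ_t − φ_xxx − 6φ_x²) − 3φ_yy + 6(φ_x φ_y − φ_y φ_x) = 0. -/

import Mathlib

attribute [local instance] Matrix.normedAddCommGroup Matrix.normedSpace

/-- Partial derivative in the `x`-direction of a function of three real variables. -/
noncomputable def pdx {E : Type*} [NormedAddCommGroup E] [NormedSpace ℝ E]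
    (f : ℝ × ℝ × ℝ → E) : ℝ × ℝ × ℝ → E :=
  fun p => fderiv ℝ f p (1, 0, 0)

/-- Partial derivative in the `y`-direction of a function of three real variables. -/
noncomputable def pdy {E : Type*} [NormedAddCommGroup E] [NormedSpace ℝ E]
    (f : ℝ × ℝ × ℝ → E) : ℝ × ℝ × ℝ → E :=
  fun p => fderiv ℝ f p (0, 1, 0)

/-- Partial derivative in the `t`-direction of a function of three real variables. -/
noncomputable def pdt {E : Type*} [NormedAddCommGroup E] [NormedSpace ℝ E]
    (f : ℝ × ℝ × ℝ → E) : ℝ × ℝ × ℝ → E :=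
  fun p => fderiv ℝ f p (0, 0, 1)


section aux
variable {n : ℕ}

noncomputable def clmNAG : NormedAddCommGroup (ℝ × ℝ × ℝ →L[ℝ] Matrix (Fin n) (Fin n) ℝ) :=
  ContinuousLinearMap.toNormedAddCommGroup

attribute [local instance] clmNAG

noncomputable def clmNS : NormedSpace ℝ (ℝ × ℝ × ℝ →L[ℝ] Matrix (Fin n) (Fin n) ℝ) :=
  ContinuousLinearMap.toNormedSpace

attribute [local instance] clmNS

noncomputable def Dv (v : ℝ × ℝ × ℝ) (f : ℝ × ℝ × ℝ → Matrix (Fin n) (Fin n) ℝ) :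
    ℝ × ℝ × ℝ → Matrix (Fin n) (Fin n) ℝ := fun p => fderiv ℝ f p v

noncomputable def mulL (n : ℕ) :
    Matrix (Fin n) (Fin n) ℝ →L[ℝ] Matrix (Fin n) (Fin n) ℝ →L[ℝ] Matrix (Fin n) (Fin n) ℝ :=
  LinearMap.toContinuousLinearMap
    ((LinearMap.toContinuousLinearMap :
        (Matrix (Fin n) (Fin n) ℝ →ₗ[ℝ] Matrix (Fin n) (Fin n) ℝ) ≃ₗ[ℝ]
          (Matrix (Fin n) (Fin n) ℝ →L[ℝ] Matrix (Fin n) (Fin n) ℝ)).toLinearMap.comp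
      (LinearMap.mul ℝ (Matrix (Fin n) (Fin n) ℝ)))

lemma mulL_apply (a b : Matrix (Fin n) (Fin n) ℝ) : mulL n a b = a * b := rfl

lemma cdMul {f g : ℝ × ℝ × ℝ → Matrix (Fin n) (Fin n) ℝ}
    (hf : ContDiff ℝ (⊤ : ℕ∞) f) (hg : ContDiff ℝ (⊤ : ℕ∞) g) :
    ContDiff ℝ (⊤ : ℕ∞) (fun q => f q * g q) :=
  (mulL n).isBoundedBilinearMap.contDiff.comp (hf.prodMk hg)

lemma cdDv {f : ℝ × ℝ × ℝ → Matrix (Fin n) (Fin n) ℝ}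
    (hf : ContDiff ℝ (⊤ : ℕ∞) f) (v : ℝ × ℝ × ℝ) :
    ContDiff ℝ (⊤ : ℕ∞) (Dv v f) :=
  (hf.fderiv_right (by norm_cast)).clm_apply contDiff_const

lemma Dv_add {f g : ℝ × ℝ × ℝ → Matrix (Fin n) (Fin n) ℝ}
    (hf : ContDiff ℝ (⊤ : ℕ∞) f) (hg : ContDiff ℝ (⊤ : ℕ∞) g) (v : ℝ × ℝ × ℝ) :
    Dv v (fun q => f q + g q) = fun p => Dv v f p + Dv v g p := by
  funext p
  exact congrArg (fun L => L v) (fderiv_fun_add (hf.differentiable (by norm_cast) p) (hg.differentiable (by norm_cast) p))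

lemma Dv_sub {f g : ℝ × ℝ × ℝ → Matrix (Fin n) (Fin n) ℝ}
    (hf : ContDiff ℝ (⊤ : ℕ∞) f) (hg : ContDiff ℝ (⊤ : ℕ∞) g) (v : ℝ × ℝ × ℝ) :
    Dv v (fun q => f q - g q) = fun p => Dv v f p - Dv v g p := by
  funext p
  exact congrArg (fun L => L v) (fderiv_fun_sub (hf.differentiable (by norm_cast) p) (hg.differentiable (by norm_cast) p))

lemma Dv_smul {f : ℝ × ℝ × ℝ → Matrix (Fin n) (Fin n) ℝ}
    (hf : ContDiff ℝ (⊤ : ℕ∞) f) (c : ℝ) (v : ℝ × ℝ × ℝ) :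
    Dv v (fun q => c • f q) = fun p => c • Dv v f p := by
  funext p
  exact congrArg (fun L => L v) (fderiv_fun_const_smul (hf.differentiable (by norm_cast) p) c)

lemma Dv_mul {f g : ℝ × ℝ × ℝ → Matrix (Fin n) (Fin n) ℝ}
    (hf : ContDiff ℝ (⊤ : ℕ∞) f) (hg : ContDiff ℝ (⊤ : ℕ∞) g) (v : ℝ × ℝ × ℝ) :
    Dv v (fun q => f q * g q) = fun p => Dv v f p * g p + f p * Dv v g p := by
  funext p
  have h : fderiv ℝ (fun q => mulL n (f q) (g q)) p =
      (mulL n).precompR (ℝ × ℝ × ℝ) (f p) (fderiv ℝ g p)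
        + (mulL n).precompL (ℝ × ℝ × ℝ) (fderiv ℝ f p) (g p) :=
    (mulL n).fderiv_of_bilinear (hf.differentiable (by norm_cast) p) (hg.differentiable (by norm_cast) p)
  have h2 : fderiv ℝ (fun q => f q * g q) p =
      (mulL n).precompR (ℝ × ℝ × ℝ) (f p) (fderiv ℝ g p)
        + (mulL n).precompL (ℝ × ℝ × ℝ) (fderiv ℝ f p) (g p) := h
  simp only [Dv, h2]
  change f p * fderiv ℝ g p v + fderiv ℝ f p v * g p = _
  abel

lemma Dv_comm {f : ℝ × ℝ × ℝ → Matrix (Fin n) (Fin n) ℝ}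
    (hf : ContDiff ℝ (⊤ : ℕ∞) f) (v w : ℝ × ℝ × ℝ) :
    Dv v (Dv w f) = Dv w (Dv v f) := by
  funext p
  have hd : ContDiff ℝ (⊤ : ℕ∞) (fderiv ℝ f) := hf.fderiv_right (by norm_cast)
  have key : ∀ u u' : ℝ × ℝ × ℝ, fderiv ℝ (Dv u f) p u' = fderiv ℝ (fderiv ℝ f) p u' u := by
    intro u u'
    have h := ((ContinuousLinearMap.apply ℝ (Matrix (Fin n) (Fin n) ℝ) u).hasFDerivAt
        (x := fderiv ℝ f p)).comp p (hd.differentiable (by norm_cast) p).hasFDerivAt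
    have h2 : HasFDerivAt (Dv u f)
        ((ContinuousLinearMap.apply ℝ (Matrix (Fin n) (Fin n) ℝ) u).comp
          (fderiv ℝ (fderiv ℝ f) p)) p := h
    exact congrArg (fun L => L u') h2.fderiv
  have hsymm : IsSymmSndFDerivAt ℝ f p :=
    hf.contDiffAt.isSymmSndFDerivAt (n := ((⊤ : ℕ∞) : WithTop ℕ∞)) (by simp; exact WithTop.coe_le_coe.mpr le_top)
  show fderiv ℝ (Dv w f) p v = fderiv ℝ (Dv v f) p w
  rw [key, key]; exact hsymm v w

lemma pdx_eq (f : ℝ × ℝ × ℝ → Matrix (Fin n) (Fin n) ℝ) : pdx f = Dv (1,0,0) f := rfl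
lemma pdy_eq (f : ℝ × ℝ × ℝ → Matrix (Fin n) (Fin n) ℝ) : pdy f = Dv (0,1,0) f := rfl
lemma pdt_eq (f : ℝ × ℝ × ℝ → Matrix (Fin n) (Fin n) ℝ) : pdt f = Dv (0,0,1) f := rfl

end aux

/-- Any solution of the first two noncommutative Burgers hierarchy equations
also solves the noncommutative potential KP equation. -/
theorem pKP_of_burgers (n : ℕ) (φ : ℝ × ℝ × ℝ → Matrix (Fin n) (Fin n) ℝ)
    (hφ : ContDiff ℝ (⊤ : ℕ∞) φ)
    (hb1 : ∀ p, pdy φ p = pdx (pdx φ) p + 2 • (pdx φ p * φ p))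
    (hb2 : ∀ p, pdt φ p = pdx (pdx (pdx φ)) p + 3 • (pdx (pdx φ) p * φ p)
        + 3 • (pdx φ p * pdx φ p) + 3 • (pdx φ p * (φ p * φ p))) :
    ∀ p, pdx (fun q => (4 : ℝ) • pdt φ q - pdx (pdx (pdx φ)) q
          - (6 : ℝ) • (pdx φ q * pdx φ q)) p
        - (3 : ℝ) • pdy (pdy φ) p
        + (6 : ℝ) • (pdx φ p * pdy φ p - pdy φ p * pdx φ p) = 0 := by
  intro p
  have hs1 : ContDiff ℝ (⊤:ℕ∞) (Dv (1,0,0) φ) := cdDv hφ _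
  have hs2 : ContDiff ℝ (⊤:ℕ∞) (Dv (1,0,0) (Dv (1,0,0) φ)) := cdDv hs1 _
  have hs3 : ContDiff ℝ (⊤:ℕ∞) (Dv (1,0,0) (Dv (1,0,0) (Dv (1,0,0) φ))) := cdDv hs2 _
  have hsY : ContDiff ℝ (⊤:ℕ∞) (Dv (0,1,0) φ) := cdDv hφ _
  have hsT : ContDiff ℝ (⊤:ℕ∞) (Dv (0,0,1) φ) := cdDv hφ _
  have m00 : ContDiff ℝ (⊤:ℕ∞) (fun q => φ q * φ q) := cdMul hφ hφ
  have m10 : ContDiff ℝ (⊤:ℕ∞) (fun q => Dv (1,0,0) φ q * φ q) := cdMul hs1 hφ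
  have m11 : ContDiff ℝ (⊤:ℕ∞) (fun q => Dv (1,0,0) φ q * Dv (1,0,0) φ q) := cdMul hs1 hs1
  have m20 : ContDiff ℝ (⊤:ℕ∞) (fun q => Dv (1,0,0) (Dv (1,0,0) φ) q * φ q) := cdMul hs2 hφ
  have m100 : ContDiff ℝ (⊤:ℕ∞) (fun q => Dv (1,0,0) φ q * (φ q * φ q)) := cdMul hs1 m00
  have hb1' : Dv (0,1,0) φ = fun q => Dv (1,0,0) (Dv (1,0,0) φ) q + (2:ℝ) • (Dv (1,0,0) φ q * φ q) := by
    funext q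
    have h := hb1 q
    simp only [pdx_eq, pdy_eq] at h
    simp only [h, ← Nat.cast_smul_eq_nsmul ℝ, Nat.cast_ofNat]
  have hb2' : Dv (0,0,1) φ = fun q => Dv (1,0,0) (Dv (1,0,0) (Dv (1,0,0) φ)) q + (3:ℝ) • (Dv (1,0,0) (Dv (1,0,0) φ) q * φ q)
      + (3:ℝ) • (Dv (1,0,0) φ q * Dv (1,0,0) φ q) + (3:ℝ) • (Dv (1,0,0) φ q * (φ q * φ q)) := by
    funext q
    have h := hb2 q
    simp only [pdx_eq, pdt_eq] at h
    simp only [h, ← Nat.cast_smul_eq_nsmul ℝ, Nat.cast_ofNat]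
  have eTx : Dv (1,0,0) (Dv (0,0,1) φ) = fun q => Dv (1,0,0) (Dv (1,0,0) (Dv (1,0,0) (Dv (1,0,0) φ))) q
      + (3:ℝ) • (Dv (1,0,0) (Dv (1,0,0) (Dv (1,0,0) φ)) q * φ q + Dv (1,0,0) (Dv (1,0,0) φ) q * Dv (1,0,0) φ q)
      + (3:ℝ) • (Dv (1,0,0) (Dv (1,0,0) φ) q * Dv (1,0,0) φ q + Dv (1,0,0) φ q * Dv (1,0,0) (Dv (1,0,0) φ) q)
      + (3:ℝ) • (Dv (1,0,0) (Dv (1,0,0) φ) q * (φ q * φ q) + Dv (1,0,0) φ q * (Dv (1,0,0) φ q * φ q + φ q * Dv (1,0,0) φ q)) := by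
    rw [hb2',
        Dv_add ((hs3.add (m20.const_smul (3:ℝ))).add (m11.const_smul (3:ℝ)))
          (m100.const_smul (3:ℝ)) (1,0,0),
        Dv_add (hs3.add (m20.const_smul (3:ℝ))) (m11.const_smul (3:ℝ)) (1,0,0),
        Dv_add hs3 (m20.const_smul (3:ℝ)) (1,0,0),
        Dv_smul m20 (3:ℝ) (1,0,0), Dv_smul m11 (3:ℝ) (1,0,0), Dv_smul m100 (3:ℝ) (1,0,0),
        Dv_mul hs2 hφ (1,0,0), Dv_mul hs1 hs1 (1,0,0), Dv_mul hs1 m00 (1,0,0),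
        Dv_mul hφ hφ (1,0,0)]
  have e2 : Dv (1,0,0) (Dv (0,1,0) φ) = fun q => Dv (1,0,0) (Dv (1,0,0) (Dv (1,0,0) φ)) q
      + (2:ℝ) • (Dv (1,0,0) (Dv (1,0,0) φ) q * φ q + Dv (1,0,0) φ q * Dv (1,0,0) φ q) := by
    rw [hb1', Dv_add hs2 (m10.const_smul (2:ℝ)) (1,0,0), Dv_smul m10 (2:ℝ) (1,0,0),
        Dv_mul hs1 hφ (1,0,0)]
  have e3 : Dv (1,0,0) (Dv (1,0,0) (Dv (0,1,0) φ)) = fun q => Dv (1,0,0) (Dv (1,0,0) (Dv (1,0,0) (Dv (1,0,0) φ))) q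
      + (2:ℝ) • ((Dv (1,0,0) (Dv (1,0,0) (Dv (1,0,0) φ)) q * φ q + Dv (1,0,0) (Dv (1,0,0) φ) q * Dv (1,0,0) φ q) + (Dv (1,0,0) (Dv (1,0,0) φ) q * Dv (1,0,0) φ q + Dv (1,0,0) φ q * Dv (1,0,0) (Dv (1,0,0) φ) q)) := by
    rw [e2, Dv_add hs3 ((m20.add m11).const_smul (2:ℝ)) (1,0,0),
        Dv_smul (m20.add m11) (2:ℝ) (1,0,0), Dv_add m20 m11 (1,0,0),
        Dv_mul hs2 hφ (1,0,0), Dv_mul hs1 hs1 (1,0,0)]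
  have eyy : Dv (0,1,0) (Dv (0,1,0) φ) = fun q =>
      (Dv (1,0,0) (Dv (1,0,0) (Dv (1,0,0) (Dv (1,0,0) φ))) q + (2:ℝ) • ((Dv (1,0,0) (Dv (1,0,0) (Dv (1,0,0) φ)) q * φ q + Dv (1,0,0) (Dv (1,0,0) φ) q * Dv (1,0,0) φ q) + (Dv (1,0,0) (Dv (1,0,0) φ) q * Dv (1,0,0) φ q + Dv (1,0,0) φ q * Dv (1,0,0) (Dv (1,0,0) φ) q)))
      + (2:ℝ) • (((Dv (1,0,0) (Dv (1,0,0) (Dv (1,0,0) φ)) q + (2:ℝ) • (Dv (1,0,0) (Dv (1,0,0) φ) q * φ q + Dv (1,0,0) φ q * Dv (1,0,0) φ q)) * φ q)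
        + Dv (1,0,0) φ q * (Dv (1,0,0) (Dv (1,0,0) φ) q + (2:ℝ) • (Dv (1,0,0) φ q * φ q))) := by
    conv_lhs => rw [hb1']
    rw [Dv_add hs2 (m10.const_smul (2:ℝ)) (0,1,0), Dv_smul m10 (2:ℝ) (0,1,0),
        Dv_mul hs1 hφ (0,1,0),
        Dv_comm hs1 (0,1,0) (1,0,0), Dv_comm hφ (0,1,0) (1,0,0),
        e3, e2, hb1']
  show Dv (1,0,0) (fun q => (4 : ℝ) • Dv (0,0,1) φ q - Dv (1,0,0) (Dv (1,0,0) (Dv (1,0,0) φ)) q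
          - (6 : ℝ) • (Dv (1,0,0) φ q * Dv (1,0,0) φ q)) p
      - (3 : ℝ) • Dv (0,1,0) (Dv (0,1,0) φ) p
      + (6 : ℝ) • (Dv (1,0,0) φ p * Dv (0,1,0) φ p - Dv (0,1,0) φ p * Dv (1,0,0) φ p) = 0
  rw [Dv_sub ((hsT.const_smul (4:ℝ)).sub hs3) (m11.const_smul (6:ℝ)) (1,0,0),
      Dv_sub (hsT.const_smul (4:ℝ)) hs3 (1,0,0),
      Dv_smul hsT (4:ℝ) (1,0,0), Dv_smul m11 (6:ℝ) (1,0,0),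
      Dv_mul hs1 hs1 (1,0,0),
      eTx, eyy, hb1']
  simp only [smul_add, smul_sub, mul_add, add_mul, mul_smul_comm, smul_mul_assoc,
    mul_assoc, smul_smul]
  module
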